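/- Let G be a simple graph and let C₁ and C₂ be two vertex-disjoint cycles in G. Suppose u, u′, v, v′ are four distinct vertices of C₁ such that u u′ and v v′ are edges of C₁ and the graph C₁ minus the two edges u u′ and v v′ consists of two paths, one with endpoints u′ and v and the other with endpoints u and v′. Suppose u″ v″ is an edge of C₂, and suppose u v, u′ u″ and v′ v″ are edges of G not belonging to C₁ or C₂. Then the subgraph whose edge set is the symmetric difference of E(C₁) ∪ E(C₂) with the edge set {u u′, v v′, u″ v″, u v, u′ u″, v′ v″} of the 6-cycle (u, u′, u″, v″, v′, v) is a single cycle whose vertex set is V(C₁) ∪ V(C₂). -/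

import Mathlib

/-- A cycle in a simple graph, as a subgraph: a connected 2-regular subgraph. -/
def IsCycleSubgraph {V : Type*} {G : SimpleGraph V} (H : G.Subgraph) : Prop :=
  H.Connected ∧ ∀ v ∈ H.verts, (H.neighborSet v).ncard = 2

open SimpleGraph

private lemma aux_two {α : Type*} {N : Set α} {a c : α} (h2 : N.ncard = 2) (ha : a ∈ N)
    (hc : c ∉ N) : ((N \ {a}) ∪ {c}).ncard = 2 := by
  obtain ⟨x, y, hxy, rfl⟩ := Set.ncard_eq_two.mp h2
  rcases ha with rfl | rfl
  · have : ({a, y} : Set α) \ {a} ∪ {c} = {y, c} := by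
      ext z
      simp only [Set.mem_union, Set.mem_diff, Set.mem_insert_iff, Set.mem_singleton_iff]
      constructor
      · rintro (⟨h | h, h2⟩ | h) <;> tauto
      · rintro (rfl | rfl)
        · exact Or.inl ⟨Or.inr rfl, fun h => hxy h.symm⟩
        · exact Or.inr rfl
    rw [this]
    exact Set.ncard_pair (fun h => hc (by simp [h]))
  · have : ({x, a} : Set α) \ {a} ∪ {c} = {x, c} := by
      ext z
      simp only [Set.mem_union, Set.mem_diff, Set.mem_insert_iff, Set.mem_singleton_iff]
      constructor
      · rintro (⟨h | h, h2⟩ | h) <;> tauto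
      · rintro (rfl | rfl)
        · exact Or.inl ⟨Or.inl rfl, fun h => hxy h⟩
        · exact Or.inr rfl
    rw [this]
    exact Set.ncard_pair (fun h => hc (by simp [h]))

private lemma reach_del {V : Type*} {H : SimpleGraph V} {s : Set (Sym2 V)} :
    ∀ {w t : V}, H.Walk w t →
      (H.deleteEdges s).Reachable w t ∨ ∃ x y, s(x, y) ∈ s ∧ (H.deleteEdges s).Reachable w x := by
  intro w t p
  induction p with
  | nil => exact Or.inl (Reachable.refl _)
  | @cons a b c h p ih =>
    by_cases he : s(a, b) ∈ s
    · exact Or.inr ⟨a, b, he, Reachable.refl _⟩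
    · have hab : (H.deleteEdges s).Adj a b := by
        rw [SimpleGraph.deleteEdges_adj]; exact ⟨h, he⟩
      rcases ih with h1 | ⟨x, y, hxy, hr⟩
      · exact Or.inl (hab.reachable.trans h1)
      · exact Or.inr ⟨x, y, hxy, hab.reachable.trans hr⟩

private lemma coe_reach {V : Type*} {G : SimpleGraph V} (H : G.Subgraph) :
    ∀ {x y : V}, H.spanningCoe.Reachable x y → ∀ (hx : x ∈ H.verts) (hy : y ∈ H.verts),
      H.coe.Reachable ⟨x, hx⟩ ⟨y, hy⟩ := by
  intro x y h
  obtain ⟨p⟩ := h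
  induction p with
  | nil => intro hx hy; exact Reachable.refl _
  | @cons a b c hadj p ih =>
    intro hx hy
    have hAdj : H.Adj a b := hadj
    have hb : b ∈ H.verts := H.edge_vert hAdj.symm
    exact Reachable.trans (SimpleGraph.Adj.reachable (by exact hAdj : H.coe.Adj ⟨a, hx⟩ ⟨b, hb⟩))
      (ih hb hy)

set_option maxHeartbeats 2000000 in
/-- Let `C₁, C₂` be vertex-disjoint cycles of `G`; let `u u'` and `v v'` be edges of
`C₁` such that `C₁` minus these two edges consists of two paths, one joining `u'` to
`v` and the other joining `u` to `v'`; let `u'' v''` be an edge of `C₂`; and let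
`u v`, `u' u''`, `v' v''` be edges of `G` lying on neither cycle.  Then the subgraph
whose edge set is the symmetric difference of `E(C₁) ∪ E(C₂)` with the edge set of
the 6-cycle `(u, u', u'', v'', v', v)` is a single cycle on the vertex set
`V(C₁) ∪ V(C₂)`. -/
theorem stmt15 {V : Type*} (G : SimpleGraph V) (C₁ C₂ : G.Subgraph)
    (hC₁ : IsCycleSubgraph C₁) (hC₂ : IsCycleSubgraph C₂)
    (hdisj : Disjoint C₁.verts C₂.verts)
    (u u' v v' u'' v'' : V)
    (hdist : [u, u', v, v'].Pairwise (· ≠ ·))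
    (huu' : C₁.Adj u u') (hvv' : C₁.Adj v v')
    (hpath1 : ((C₁.deleteEdges {s(u, u'), s(v, v')}).spanningCoe).Reachable u' v)
    (hpath2 : ((C₁.deleteEdges {s(u, u'), s(v, v')}).spanningCoe).Reachable u v')
    (hC₂e : C₂.Adj u'' v'')
    (huv : G.Adj u v) (huv1 : ¬ C₁.Adj u v) (huv2 : ¬ C₂.Adj u v)
    (hu'u'' : G.Adj u' u'') (hu'u''1 : ¬ C₁.Adj u' u'') (hu'u''2 : ¬ C₂.Adj u' u'')
    (hv'v'' : G.Adj v' v'') (hv'v''1 : ¬ C₁.Adj v' v'') (hv'v''2 : ¬ C₂.Adj v' v'') :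
    ∃ C : G.Subgraph,
      C.verts = C₁.verts ∪ C₂.verts ∧
      C.edgeSet = symmDiff (C₁.edgeSet ∪ C₂.edgeSet)
        {s(u, u'), s(v, v'), s(u'', v''), s(u, v), s(u', u''), s(v', v'')} ∧
      IsCycleSubgraph C := by
  obtain ⟨hC₁conn, hC₁deg⟩ := hC₁
  obtain ⟨hC₂conn, hC₂deg⟩ := hC₂
  obtain ⟨ha, hb⟩ := List.pairwise_cons.mp hdist
  obtain ⟨hc, hd⟩ := List.pairwise_cons.mp hb
  obtain ⟨he, -⟩ := List.pairwise_cons.mp hd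
  have n1 : u ≠ u' := ha u' (by simp)
  have n2 : u ≠ v := ha v (by simp)
  have n3 : u ≠ v' := ha v' (by simp)
  have n4 : u' ≠ v := hc v (by simp)
  have n5 : u' ≠ v' := hc v' (by simp)
  have n6 : v ≠ v' := he v' (by simp)
  have hu1 : u ∈ C₁.verts := C₁.edge_vert huu'
  have hu'1 : u' ∈ C₁.verts := C₁.edge_vert huu'.symm
  have hv1 : v ∈ C₁.verts := C₁.edge_vert hvv'
  have hv'1 : v' ∈ C₁.verts := C₁.edge_vert hvv'.symm
  have hu''2 : u'' ∈ C₂.verts := C₂.edge_vert hC₂e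
  have hv''2 : v'' ∈ C₂.verts := C₂.edge_vert hC₂e.symm
  have hD : ∀ ⦃a : V⦄, a ∈ C₁.verts → a ∈ C₂.verts → False :=
    fun a h1 h2 => Set.disjoint_left.mp hdisj h1 h2
  have m1 : u ≠ u'' := fun h => hD hu1 (by rw [h]; exact hu''2)
  have m2 : u ≠ v'' := fun h => hD hu1 (by rw [h]; exact hv''2)
  have m3 : u' ≠ u'' := fun h => hD hu'1 (by rw [h]; exact hu''2)
  have m4 : u' ≠ v'' := fun h => hD hu'1 (by rw [h]; exact hv''2)
  have m5 : v ≠ u'' := fun h => hD hv1 (by rw [h]; exact hu''2)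
  have m6 : v ≠ v'' := fun h => hD hv1 (by rw [h]; exact hv''2)
  have m7 : v' ≠ u'' := fun h => hD hv'1 (by rw [h]; exact hu''2)
  have m8 : v' ≠ v'' := fun h => hD hv'1 (by rw [h]; exact hv''2)
  have k1 : u'' ≠ v'' := hC₂e.ne
  have hnC₂ : ∀ a ∈ C₁.verts, ∀ x, ¬ C₂.Adj a x := fun a ha x h => hD ha (C₂.edge_vert h)
  have hnC₁ : ∀ a ∈ C₂.verts, ∀ x, ¬ C₁.Adj a x := fun a ha x h => hD (C₁.edge_vert h) ha
  let C : G.Subgraph :=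
    { verts := C₁.verts ∪ C₂.verts
      Adj := fun x y =>
        (C₁.Adj x y ∧ ¬(x = u ∧ y = u') ∧ ¬(x = u' ∧ y = u) ∧ ¬(x = v ∧ y = v') ∧
          ¬(x = v' ∧ y = v)) ∨
        (C₂.Adj x y ∧ ¬(x = u'' ∧ y = v'') ∧ ¬(x = v'' ∧ y = u'')) ∨
        (x = u ∧ y = v) ∨ (x = v ∧ y = u) ∨
        (x = u' ∧ y = u'') ∨ (x = u'' ∧ y = u') ∨
        (x = v' ∧ y = v'') ∨ (x = v'' ∧ y = v')
      adj_sub := by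
        rintro x y (⟨h, -⟩ | ⟨h, -⟩ | ⟨rfl, rfl⟩ | ⟨rfl, rfl⟩ | ⟨rfl, rfl⟩ | ⟨rfl, rfl⟩ |
          ⟨rfl, rfl⟩ | ⟨rfl, rfl⟩)
        exacts [C₁.adj_sub h, C₂.adj_sub h, huv, huv.symm, hu'u'', hu'u''.symm, hv'v'',
          hv'v''.symm]
      edge_vert := by
        rintro x y (⟨h, -⟩ | ⟨h, -⟩ | ⟨rfl, rfl⟩ | ⟨rfl, rfl⟩ | ⟨rfl, rfl⟩ | ⟨rfl, rfl⟩ |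
          ⟨rfl, rfl⟩ | ⟨rfl, rfl⟩)
        exacts [Or.inl (C₁.edge_vert h), Or.inr (C₂.edge_vert h), Or.inl hu1, Or.inl hv1,
          Or.inl hu'1, Or.inr hu''2, Or.inl hv'1, Or.inr hv''2]
      symm := by
        constructor
        rintro x y (⟨h, h1, h2, h3, h4⟩ | ⟨h, h1, h2⟩ | ⟨rfl, rfl⟩ | ⟨rfl, rfl⟩ | ⟨rfl, rfl⟩ |
          ⟨rfl, rfl⟩ | ⟨rfl, rfl⟩ | ⟨rfl, rfl⟩)
        · exact Or.inl ⟨h.symm, fun hp => h2 ⟨hp.2, hp.1⟩, fun hp => h1 ⟨hp.2, hp.1⟩,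
            fun hp => h4 ⟨hp.2, hp.1⟩, fun hp => h3 ⟨hp.2, hp.1⟩⟩
        · exact Or.inr (Or.inl ⟨h.symm, fun hp => h2 ⟨hp.2, hp.1⟩, fun hp => h1 ⟨hp.2, hp.1⟩⟩)
        · exact Or.inr (Or.inr (Or.inr (Or.inl ⟨rfl, rfl⟩)))
        · exact Or.inr (Or.inr (Or.inl ⟨rfl, rfl⟩))
        · exact Or.inr (Or.inr (Or.inr (Or.inr (Or.inr (Or.inl ⟨rfl, rfl⟩)))))
        · exact Or.inr (Or.inr (Or.inr (Or.inr (Or.inl ⟨rfl, rfl⟩))))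
        · exact Or.inr (Or.inr (Or.inr (Or.inr (Or.inr (Or.inr (Or.inr ⟨rfl, rfl⟩))))))
        · exact Or.inr (Or.inr (Or.inr (Or.inr (Or.inr (Or.inr (Or.inl ⟨rfl, rfl⟩)))))) }
  have hCadj : ∀ x y : V, C.Adj x y ↔
      ((C₁.Adj x y ∧ ¬(x = u ∧ y = u') ∧ ¬(x = u' ∧ y = u) ∧ ¬(x = v ∧ y = v') ∧
          ¬(x = v' ∧ y = v)) ∨
        (C₂.Adj x y ∧ ¬(x = u'' ∧ y = v'') ∧ ¬(x = v'' ∧ y = u'')) ∨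
        (x = u ∧ y = v) ∨ (x = v ∧ y = u) ∨
        (x = u' ∧ y = u'') ∨ (x = u'' ∧ y = u') ∨
        (x = v' ∧ y = v'') ∨ (x = v'' ∧ y = v')) := fun _ _ => Iff.rfl
  refine ⟨C, rfl, ?_, ?_, ?_⟩
  · -- edge set
    have hsd : symmDiff (C₁.edgeSet ∪ C₂.edgeSet)
        {s(u, u'), s(v, v'), s(u'', v''), s(u, v), s(u', u''), s(v', v'')} =
        ((C₁.edgeSet ∪ C₂.edgeSet) \ {s(u, u'), s(v, v'), s(u'', v'')}) ∪
          {s(u, v), s(u', u''), s(v', v'')} := by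
      have e1 : s(u, u') ∈ C₁.edgeSet := huu'
      have e2 : s(v, v') ∈ C₁.edgeSet := hvv'
      have e3 : s(u'', v'') ∈ C₂.edgeSet := hC₂e
      have f1 : s(u, v) ∉ C₁.edgeSet ∪ C₂.edgeSet := by
        rintro (h | h); exacts [huv1 h, huv2 h]
      have f2 : s(u', u'') ∉ C₁.edgeSet ∪ C₂.edgeSet := by
        rintro (h | h); exacts [hu'u''1 h, hu'u''2 h]
      have f3 : s(v', v'') ∉ C₁.edgeSet ∪ C₂.edgeSet := by
        rintro (h | h); exacts [hv'v''1 h, hv'v''2 h]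
      ext e
      simp only [Set.mem_symmDiff, Set.mem_union, Set.mem_diff, Set.mem_insert_iff,
        Set.mem_singleton_iff]
      constructor
      · rintro (⟨hA, hS⟩ | ⟨(rfl | rfl | rfl | rfl | rfl | rfl), hA⟩)
        · exact Or.inl ⟨hA, fun h => hS (by tauto)⟩
        · exact absurd (Or.inl e1) hA
        · exact absurd (Or.inl e2) hA
        · exact absurd (Or.inr e3) hA
        · exact Or.inr (Or.inl rfl)
        · exact Or.inr (Or.inr (Or.inl rfl))
        · exact Or.inr (Or.inr (Or.inr rfl))
      · rintro (⟨hA, hS3⟩ | (rfl | rfl | rfl))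
        · refine Or.inl ⟨hA, ?_⟩
          rintro (h | h | h | rfl | rfl | rfl)
          exacts [hS3 (Or.inl h), hS3 (Or.inr (Or.inl h)), hS3 (Or.inr (Or.inr h)),
            f1 hA, f2 hA, f3 hA]
        · exact Or.inr ⟨Or.inr (Or.inr (Or.inr (Or.inl rfl))), f1⟩
        · exact Or.inr ⟨Or.inr (Or.inr (Or.inr (Or.inr (Or.inl rfl)))), f2⟩
        · exact Or.inr ⟨Or.inr (Or.inr (Or.inr (Or.inr (Or.inr rfl)))), f3⟩
    rw [hsd]
    ext e
    induction e with
    | _ x y =>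
      have p1 : C₁.Adj x y → ¬(x = u'' ∧ y = v'') := by
        rintro h ⟨rfl, rfl⟩; exact hD (C₁.edge_vert h) hu''2
      have p2 : C₁.Adj x y → ¬(x = v'' ∧ y = u'') := by
        rintro h ⟨rfl, rfl⟩; exact hD (C₁.edge_vert h) hv''2
      have q1 : C₂.Adj x y → ¬(x = u ∧ y = u') := by
        rintro h ⟨rfl, rfl⟩; exact hD hu1 (C₂.edge_vert h)
      have q2 : C₂.Adj x y → ¬(x = u' ∧ y = u) := by
        rintro h ⟨rfl, rfl⟩; exact hD hu'1 (C₂.edge_vert h)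
      have q3 : C₂.Adj x y → ¬(x = v ∧ y = v') := by
        rintro h ⟨rfl, rfl⟩; exact hD hv1 (C₂.edge_vert h)
      have q4 : C₂.Adj x y → ¬(x = v' ∧ y = v) := by
        rintro h ⟨rfl, rfl⟩; exact hD hv'1 (C₂.edge_vert h)
      simp only [Subgraph.mem_edgeSet, hCadj, Set.mem_union, Set.mem_diff, Set.mem_insert_iff,
        Set.mem_singleton_iff, Sym2.eq_iff]
      constructor
      · rintro (⟨h, h1, h2, h3, h4⟩ | ⟨h, h1, h2⟩ | h | h | h | h | h | h)
        · refine Or.inl ⟨Or.inl h, ?_⟩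
          rintro ((hh | hh) | (hh | hh) | (hh | hh))
          exacts [h1 hh, h2 hh, h3 hh, h4 hh, p1 h hh, p2 h hh]
        · refine Or.inl ⟨Or.inr h, ?_⟩
          rintro ((hh | hh) | (hh | hh) | (hh | hh))
          exacts [q1 h hh, q2 h hh, q3 h hh, q4 h hh, h1 hh, h2 hh]
        · exact Or.inr (Or.inl (Or.inl h))
        · exact Or.inr (Or.inl (Or.inr h))
        · exact Or.inr (Or.inr (Or.inl (Or.inl h)))
        · exact Or.inr (Or.inr (Or.inl (Or.inr h)))
        · exact Or.inr (Or.inr (Or.inr (Or.inl h)))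
        · exact Or.inr (Or.inr (Or.inr (Or.inr h)))
      · rintro (⟨h | h, hS⟩ | ((h | h) | ((h | h) | (h | h))))
        · exact Or.inl ⟨h, fun hh => hS (Or.inl (Or.inl hh)), fun hh => hS (Or.inl (Or.inr hh)),
            fun hh => hS (Or.inr (Or.inl (Or.inl hh))),
            fun hh => hS (Or.inr (Or.inl (Or.inr hh)))⟩
        · exact Or.inr (Or.inl ⟨h, fun hh => hS (Or.inr (Or.inr (Or.inl hh))),
            fun hh => hS (Or.inr (Or.inr (Or.inr hh)))⟩)
        · exact Or.inr (Or.inr (Or.inl h))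
        · exact Or.inr (Or.inr (Or.inr (Or.inl h)))
        · exact Or.inr (Or.inr (Or.inr (Or.inr (Or.inl h))))
        · exact Or.inr (Or.inr (Or.inr (Or.inr (Or.inr (Or.inl h)))))
        · exact Or.inr (Or.inr (Or.inr (Or.inr (Or.inr (Or.inr (Or.inl h))))))
        · exact Or.inr (Or.inr (Or.inr (Or.inr (Or.inr (Or.inr (Or.inr h))))))
  · -- connectedness
    have hle1 : (C₁.deleteEdges {s(u, u'), s(v, v')}).spanningCoe ≤ C.spanningCoe := by
      intro a b h
      rw [Subgraph.spanningCoe_adj] at h ⊢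
      rw [Subgraph.deleteEdges_adj] at h
      rw [hCadj]
      refine Or.inl ⟨h.1, ?_, ?_, ?_, ?_⟩
      · rintro ⟨rfl, rfl⟩; exact h.2 (Set.mem_insert _ _)
      · rintro ⟨h1, h2⟩
        exact h.2 (by
          rw [h1, h2, (Sym2.eq_swap : s(u', u) = s(u, u'))]
          exact Set.mem_insert _ _)
      · rintro ⟨rfl, rfl⟩; exact h.2 (Set.mem_insert_of_mem _ rfl)
      · rintro ⟨h1, h2⟩
        exact h.2 (by
          rw [h1, h2, (Sym2.eq_swap : s(v', v) = s(v, v'))]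
          exact Set.mem_insert_of_mem _ rfl)
    have hle2 : (C₂.deleteEdges {s(u'', v'')}).spanningCoe ≤ C.spanningCoe := by
      intro a b h
      rw [Subgraph.spanningCoe_adj] at h ⊢
      rw [Subgraph.deleteEdges_adj] at h
      rw [hCadj]
      refine Or.inr (Or.inl ⟨h.1, ?_, ?_⟩)
      · rintro ⟨rfl, rfl⟩; exact h.2 rfl
      · rintro ⟨h1, h2⟩
        exact h.2 (by rw [h1, h2, (Sym2.eq_swap : s(v'', u'') = s(u'', v''))]; rfl)
    have hle1' : C₁.spanningCoe.deleteEdges {s(u, u'), s(v, v')} ≤ C.spanningCoe := by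
      rw [Subgraph.deleteEdges_spanningCoe_eq]; exact hle1
    have hle2' : C₂.spanningCoe.deleteEdges {s(u'', v'')} ≤ C.spanningCoe := by
      rw [Subgraph.deleteEdges_spanningCoe_eq]; exact hle2
    have euv : C.spanningCoe.Adj u v := by
      rw [Subgraph.spanningCoe_adj, hCadj]
      exact Or.inr (Or.inr (Or.inl ⟨rfl, rfl⟩))
    have eu'u'' : C.spanningCoe.Adj u' u'' := by
      rw [Subgraph.spanningCoe_adj, hCadj]
      exact Or.inr (Or.inr (Or.inr (Or.inr (Or.inl ⟨rfl, rfl⟩))))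
    have ev'v'' : C.spanningCoe.Adj v' v'' := by
      rw [Subgraph.spanningCoe_adj, hCadj]
      exact Or.inr (Or.inr (Or.inr (Or.inr (Or.inr (Or.inr (Or.inl ⟨rfl, rfl⟩))))))
    have ruu : C.spanningCoe.Reachable u u := Reachable.refl _
    have rvu : C.spanningCoe.Reachable v u := euv.symm.reachable
    have ru'u : C.spanningCoe.Reachable u' u :=
      ((hpath1.mono (by rw [← Subgraph.deleteEdges_spanningCoe_eq]; exact hle1')).trans rvu)
    have rv'u : C.spanningCoe.Reachable v' u :=
      (hpath2.mono (by rw [← Subgraph.deleteEdges_spanningCoe_eq]; exact hle1')).symm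
    have ru''u : C.spanningCoe.Reachable u'' u := (eu'u''.symm.reachable).trans ru'u
    have rv''u : C.spanningCoe.Reachable v'' u := (ev'v''.symm.reachable).trans rv'u
    have hreach : ∀ w ∈ C₁.verts ∪ C₂.verts, C.spanningCoe.Reachable w u := by
      rintro w (hw | hw)
      · have hmap : C₁.spanningCoe.Reachable w u :=
          (hC₁conn ⟨w, hw⟩ ⟨u, hu1⟩).map ⟨Subtype.val, fun h => h⟩
        obtain ⟨q⟩ := hmap
        rcases reach_del (s := {s(u, u'), s(v, v')}) q with h | ⟨x, y, hxy, hr⟩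
        · exact h.mono hle1'
        · have hr' : C.spanningCoe.Reachable w x := hr.mono hle1'
          rw [Set.mem_insert_iff, Set.mem_singleton_iff] at hxy
          rcases hxy with h | h <;> rw [Sym2.eq_iff] at h <;>
            rcases h with ⟨rfl, rfl⟩ | ⟨rfl, rfl⟩
          · exact hr'
          · exact hr'.trans ru'u
          · exact hr'.trans rvu
          · exact hr'.trans rv'u
      · have hmap : C₂.spanningCoe.Reachable w u'' :=
          (hC₂conn ⟨w, hw⟩ ⟨u'', hu''2⟩).map ⟨Subtype.val, fun h => h⟩
        obtain ⟨q⟩ := hmap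
        rcases reach_del (s := {s(u'', v'')}) q with h | ⟨x, y, hxy, hr⟩
        · exact (h.mono hle2').trans ru''u
        · have hr' : C.spanningCoe.Reachable w x := hr.mono hle2'
          rw [Set.mem_singleton_iff] at hxy
          rw [Sym2.eq_iff] at hxy
          rcases hxy with ⟨rfl, rfl⟩ | ⟨rfl, rfl⟩
          · exact hr'.trans ru''u
          · exact hr'.trans rv''u
    rw [Subgraph.connected_iff]
    refine ⟨⟨?_⟩, ⟨u, Or.inl hu1⟩⟩
    rintro ⟨a, haa⟩ ⟨b, hbb⟩
    exact coe_reach C ((hreach a haa).trans (hreach b hbb).symm) haa hbb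
  · -- degrees
    intro w hw
    rcases hw with hw | hw
    · by_cases h1 : w = u
      · obtain rfl := h1.symm
        have hN : C.neighborSet u = (C₁.neighborSet u \ {u'}) ∪ {v} := by
          ext x
          rw [Subgraph.mem_neighborSet, hCadj, Set.mem_union, Set.mem_diff,
            Subgraph.mem_neighborSet, Set.mem_singleton_iff, Set.mem_singleton_iff]
          constructor
          · rintro (⟨h, h2, h3, h4, h5⟩ | ⟨h, -, -⟩ | ⟨-, rfl⟩ | ⟨h, -⟩ | ⟨h, -⟩ | ⟨h, -⟩ |
              ⟨h, -⟩ | ⟨h, -⟩)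
            · exact Or.inl ⟨h, fun hx => h2 ⟨rfl, hx⟩⟩
            · exact absurd h (hnC₂ u hu1 x)
            · exact Or.inr rfl
            · exact (n2 h).elim
            · exact (n1 h).elim
            · exact (m1 h).elim
            · exact (n3 h).elim
            · exact (m2 h).elim
          · rintro (⟨h, hx⟩ | rfl)
            · exact Or.inl ⟨h, fun h' => hx h'.2, fun h' => n1 h'.1, fun h' => n2 h'.1,
                fun h' => n3 h'.1⟩
            · exact Or.inr (Or.inr (Or.inl ⟨rfl, rfl⟩))
        rw [hN]
        exact aux_two (hC₁deg u hu1) huu' huv1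
      · by_cases h2 : w = u'
        · obtain rfl := h2.symm
          have hN : C.neighborSet u' = (C₁.neighborSet u' \ {u}) ∪ {u''} := by
            ext x
            rw [Subgraph.mem_neighborSet, hCadj, Set.mem_union, Set.mem_diff,
            Subgraph.mem_neighborSet, Set.mem_singleton_iff, Set.mem_singleton_iff]
            constructor
            · rintro (⟨h, h2, h3, h4, h5⟩ | ⟨h, -, -⟩ | ⟨h, -⟩ | ⟨h, -⟩ | ⟨-, rfl⟩ | ⟨h, -⟩ |
                ⟨h, -⟩ | ⟨h, -⟩)
              · exact Or.inl ⟨h, fun hx => h3 ⟨rfl, hx⟩⟩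
              · exact absurd h (hnC₂ u' hu'1 x)
              · exact (n1.symm h).elim
              · exact (n4 h).elim
              · exact Or.inr rfl
              · exact (m3 h).elim
              · exact (n5 h).elim
              · exact (m4 h).elim
            · rintro (⟨h, hx⟩ | rfl)
              · exact Or.inl ⟨h, fun h' => n1.symm h'.1, fun h' => hx h'.2, fun h' => n4 h'.1,
                  fun h' => n5 h'.1⟩
              · exact Or.inr (Or.inr (Or.inr (Or.inr (Or.inl ⟨rfl, rfl⟩))))
          rw [hN]
          exact aux_two (hC₁deg u' hu'1) huu'.symm hu'u''1
        · by_cases h3 : w = v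
          · obtain rfl := h3.symm
            have hN : C.neighborSet v = (C₁.neighborSet v \ {v'}) ∪ {u} := by
              ext x
              rw [Subgraph.mem_neighborSet, hCadj, Set.mem_union, Set.mem_diff,
            Subgraph.mem_neighborSet, Set.mem_singleton_iff, Set.mem_singleton_iff]
              constructor
              · rintro (⟨h, h2, h3, h4, h5⟩ | ⟨h, -, -⟩ | ⟨h, -⟩ | ⟨-, rfl⟩ | ⟨h, -⟩ | ⟨h, -⟩ |
                  ⟨h, -⟩ | ⟨h, -⟩)
                · exact Or.inl ⟨h, fun hx => h4 ⟨rfl, hx⟩⟩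
                · exact absurd h (hnC₂ v hv1 x)
                · exact (n2.symm h).elim
                · exact Or.inr rfl
                · exact (n4.symm h).elim
                · exact (m5 h).elim
                · exact (n6 h).elim
                · exact (m6 h).elim
              · rintro (⟨h, hx⟩ | rfl)
                · exact Or.inl ⟨h, fun h' => n2.symm h'.1, fun h' => n4.symm h'.1,
                    fun h' => hx h'.2, fun h' => n6 h'.1⟩
                · exact Or.inr (Or.inr (Or.inr (Or.inl ⟨rfl, rfl⟩)))
            rw [hN]
            exact aux_two (hC₁deg v hv1) hvv' (fun h => huv1 (Subgraph.adj_symm C₁ h))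
          · by_cases h4 : w = v'
            · obtain rfl := h4.symm
              have hN : C.neighborSet v' = (C₁.neighborSet v' \ {v}) ∪ {v''} := by
                ext x
                rw [Subgraph.mem_neighborSet, hCadj, Set.mem_union, Set.mem_diff,
            Subgraph.mem_neighborSet, Set.mem_singleton_iff, Set.mem_singleton_iff]
                constructor
                · rintro (⟨h, h2, h3, h4, h5⟩ | ⟨h, -, -⟩ | ⟨h, -⟩ | ⟨h, -⟩ | ⟨h, -⟩ | ⟨h, -⟩ |
                    ⟨-, rfl⟩ | ⟨h, -⟩)
                  · exact Or.inl ⟨h, fun hx => h5 ⟨rfl, hx⟩⟩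
                  · exact absurd h (hnC₂ v' hv'1 x)
                  · exact (n3.symm h).elim
                  · exact (n6.symm h).elim
                  · exact (n5.symm h).elim
                  · exact (m7 h).elim
                  · exact Or.inr rfl
                  · exact (m8 h).elim
                · rintro (⟨h, hx⟩ | rfl)
                  · exact Or.inl ⟨h, fun h' => n3.symm h'.1, fun h' => n5.symm h'.1,
                      fun h' => n6.symm h'.1, fun h' => hx h'.2⟩
                  · exact Or.inr (Or.inr (Or.inr (Or.inr (Or.inr (Or.inr (Or.inl ⟨rfl, rfl⟩))))))
              rw [hN]
              exact aux_two (hC₁deg v' hv'1) hvv'.symm hv'v''1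
            · have hN : C.neighborSet w = C₁.neighborSet w := by
                ext x
                rw [Subgraph.mem_neighborSet, hCadj, Subgraph.mem_neighborSet]
                constructor
                · rintro (⟨h, -⟩ | ⟨h, -⟩ | ⟨h, -⟩ | ⟨h, -⟩ | ⟨h, -⟩ | ⟨h, -⟩ | ⟨h, -⟩ | ⟨h, -⟩)
                  · exact h
                  · exact absurd h (hnC₂ w hw x)
                  · exact (h1 h).elim
                  · exact (h3 h).elim
                  · exact (h2 h).elim
                  · exact (hD hw (by rw [h]; exact hu''2)).elim
                  · exact (h4 h).elim
                  · exact (hD hw (by rw [h]; exact hv''2)).elim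
                · intro h
                  exact Or.inl ⟨h, fun h' => h1 h'.1, fun h' => h2 h'.1, fun h' => h3 h'.1,
                    fun h' => h4 h'.1⟩
              rw [hN]
              exact hC₁deg w hw
    · by_cases h5 : w = u''
      · obtain rfl := h5.symm
        have hN : C.neighborSet u'' = (C₂.neighborSet u'' \ {v''}) ∪ {u'} := by
          ext x
          rw [Subgraph.mem_neighborSet, hCadj, Set.mem_union, Set.mem_diff,
            Subgraph.mem_neighborSet, Set.mem_singleton_iff, Set.mem_singleton_iff]
          constructor
          · rintro (⟨h, -⟩ | ⟨h, h2, h3⟩ | ⟨h, -⟩ | ⟨h, -⟩ | ⟨h, -⟩ | ⟨-, rfl⟩ | ⟨h, -⟩ | ⟨h, -⟩)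
            · exact absurd h (hnC₁ u'' hu''2 x)
            · exact Or.inl ⟨h, fun hx => h2 ⟨rfl, hx⟩⟩
            · exact (m1.symm h).elim
            · exact (m5.symm h).elim
            · exact (m3.symm h).elim
            · exact Or.inr rfl
            · exact (m7.symm h).elim
            · exact (k1 h).elim
          · rintro (⟨h, hx⟩ | rfl)
            · exact Or.inr (Or.inl ⟨h, fun h' => hx h'.2, fun h' => k1 h'.1⟩)
            · exact Or.inr (Or.inr (Or.inr (Or.inr (Or.inr (Or.inl ⟨rfl, rfl⟩)))))
        rw [hN]
        exact aux_two (hC₂deg u'' hu''2) hC₂e (fun h => hu'u''2 (Subgraph.adj_symm C₂ h))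
      · by_cases h6 : w = v''
        · obtain rfl := h6.symm
          have hN : C.neighborSet v'' = (C₂.neighborSet v'' \ {u''}) ∪ {v'} := by
            ext x
            rw [Subgraph.mem_neighborSet, hCadj, Set.mem_union, Set.mem_diff,
            Subgraph.mem_neighborSet, Set.mem_singleton_iff, Set.mem_singleton_iff]
            constructor
            · rintro (⟨h, -⟩ | ⟨h, h2, h3⟩ | ⟨h, -⟩ | ⟨h, -⟩ | ⟨h, -⟩ | ⟨h, -⟩ | ⟨h, -⟩ |
                ⟨-, rfl⟩)
              · exact absurd h (hnC₁ v'' hv''2 x)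
              · exact Or.inl ⟨h, fun hx => h3 ⟨rfl, hx⟩⟩
              · exact (m2.symm h).elim
              · exact (m6.symm h).elim
              · exact (m4.symm h).elim
              · exact (k1.symm h).elim
              · exact (m8.symm h).elim
              · exact Or.inr rfl
            · rintro (⟨h, hx⟩ | rfl)
              · exact Or.inr (Or.inl ⟨h, fun h' => k1.symm h'.1, fun h' => hx h'.2⟩)
              · exact Or.inr (Or.inr (Or.inr (Or.inr (Or.inr (Or.inr (Or.inr ⟨rfl, rfl⟩))))))
          rw [hN]
          exact aux_two (hC₂deg v'' hv''2) hC₂e.symm (fun h => hv'v''2 (Subgraph.adj_symm C₂ h))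
        · have hwa : w ≠ u := fun h => hD hu1 (by rw [← h]; exact hw)
          have hwb : w ≠ u' := fun h => hD hu'1 (by rw [← h]; exact hw)
          have hwc : w ≠ v := fun h => hD hv1 (by rw [← h]; exact hw)
          have hwd : w ≠ v' := fun h => hD hv'1 (by rw [← h]; exact hw)
          have hN : C.neighborSet w = C₂.neighborSet w := by
            ext x
            rw [Subgraph.mem_neighborSet, hCadj, Subgraph.mem_neighborSet]
            constructor
            · rintro (⟨h, -⟩ | ⟨h, -⟩ | ⟨h, -⟩ | ⟨h, -⟩ | ⟨h, -⟩ | ⟨h, -⟩ | ⟨h, -⟩ | ⟨h, -⟩)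
              · exact absurd h (hnC₁ w hw x)
              · exact h
              · exact (hwa h).elim
              · exact (hwc h).elim
              · exact (hwb h).elim
              · exact (h5 h).elim
              · exact (hwd h).elim
              · exact (h6 h).elim
            · intro h
              exact Or.inr (Or.inl ⟨h, fun h' => h5 h'.1, fun h' => h6 h'.1⟩)
          rw [hN]
          exact hC₂deg w hw
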